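/- The element $s f$ lies in the ideal $(x^n, y^n, g)$ of $k[s,x,y]$, where $f = \sum_{j=2}^{n-1} (-1)^j x^{n+1-j} y^j$ and $g = xy(x-y)(x+y-sy)$. -/

import Mathlib

open MvPolynomial

lemma aux_L {R : Type*} [CommRing R] (x y : R) (m : ℕ) :
    ∑ t ∈ Finset.range (2 * m), (-1 : R) ^ t * x ^ (2 * m - t) * y ^ (t + 2)
      = x * y ^ 2 * (x - y) * ∑ i ∈ Finset.range m, (x ^ 2) ^ i * (y ^ 2) ^ (m - 1 - i) := by
  induction m with
  | zero => simp
  | succ m ih =>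
    have h2 : 2 * (m + 1) = 2 * m + 1 + 1 := by ring
    rw [h2, Finset.sum_range_succ, Finset.sum_range_succ]
    have hsum : ∑ t ∈ Finset.range (2 * m), (-1 : R) ^ t * x ^ (2 * m + 1 + 1 - t) * y ^ (t + 2)
        = x ^ 2 * ∑ t ∈ Finset.range (2 * m), (-1 : R) ^ t * x ^ (2 * m - t) * y ^ (t + 2) := by
      rw [Finset.mul_sum]
      refine Finset.sum_congr rfl fun t ht => ?_
      have ht' : t < 2 * m := Finset.mem_range.mp ht
      have he : 2 * m + 1 + 1 - t = (2 * m - t) + 2 := by omega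
      rw [he, pow_add]; ring
    rw [hsum, ih]
    have e1 : (-1 : R) ^ (2 * m) = 1 := by
      rw [pow_mul]; norm_num
    have e2 : (-1 : R) ^ (2 * m + 1) = -1 := by
      rw [pow_succ, e1]; ring
    have e3 : 2 * m + 1 + 1 - 2 * m = 2 := by omega
    have e4 : 2 * m + 1 + 1 - (2 * m + 1) = 1 := by omega
    rw [e1, e2, e3, e4]
    have hrs : ∑ i ∈ Finset.range (m + 1), (x ^ 2) ^ i * (y ^ 2) ^ (m + 1 - 1 - i)
        = (∑ i ∈ Finset.range m, (x ^ 2) ^ i * (y ^ 2) ^ (m - 1 - i)) * y ^ 2 + (x ^ 2) ^ m := by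
      rw [Finset.sum_range_succ, Finset.sum_mul]
      have : m + 1 - 1 - m = 0 := by omega
      rw [this, pow_zero, mul_one]
      congr 1
      refine Finset.sum_congr rfl fun i hi => ?_
      have hi' : i < m := Finset.mem_range.mp hi
      have : m + 1 - 1 - i = (m - 1 - i) + 1 := by omega
      rw [this, pow_succ]; ring
    rw [hrs]
    have hgeom : (∑ i ∈ Finset.range m, (x ^ 2) ^ i * (y ^ 2) ^ (m - 1 - i)) * (x ^ 2 - y ^ 2)
        = (x ^ 2) ^ m - (y ^ 2) ^ m := geom_sum₂_mul (x ^ 2) (y ^ 2) m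
    have ey : y ^ (2 * m + 2) = (y ^ 2) ^ m * y ^ 2 := by
      rw [← pow_mul]; ring_nf
    have ey2 : y ^ (2 * m + 1 + 2) = (y ^ 2) ^ m * y ^ 3 := by
      rw [← pow_mul]; ring_nf
    rw [ey, ey2]
    linear_combination (x * y ^ 2 * (x - y)) * hgeom

/-- `s f ∈ (x^n, y^n, g)` where `f = ∑_{j=2}^{n-1} (-1)^j x^(n+1-j) y^j`. -/
theorem stmt_4 (k : Type*) [Field k] (m n : ℕ) (hm : 4 ≤ m) (hn : n = 2 * m + 1) :
    (X 0 : MvPolynomial (Fin 3) k) *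
        (∑ j ∈ Finset.Icc 2 (n - 1),
          (-1 : MvPolynomial (Fin 3) k) ^ j * X 1 ^ (n + 1 - j) * X 2 ^ j) ∈
      Ideal.span {(X 1 : MvPolynomial (Fin 3) k) ^ n, X 2 ^ n,
        X 1 * X 2 * (X 1 - X 2) * (X 1 + X 2 - X 0 * X 2)} := by
  subst hn
  set s : MvPolynomial (Fin 3) k := X 0 with hs
  set x : MvPolynomial (Fin 3) k := X 1 with hx
  set y : MvPolynomial (Fin 3) k := X 2 with hy
  set W : MvPolynomial (Fin 3) k :=
    ∑ i ∈ Finset.range m, (x ^ 2) ^ i * (y ^ 2) ^ (m - 1 - i) with hW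
  set g : MvPolynomial (Fin 3) k := x * y * (x - y) * (x + y - s * y) with hg
  have hgeom : W * (x ^ 2 - y ^ 2) = (x ^ 2) ^ m - (y ^ 2) ^ m :=
    geom_sum₂_mul (x ^ 2) (y ^ 2) m
  -- rewrite the F-sum
  have hF : ∑ j ∈ Finset.Icc 2 (2 * m + 1 - 1),
        (-1 : MvPolynomial (Fin 3) k) ^ j * x ^ (2 * m + 1 + 1 - j) * y ^ j
      = x * y ^ 2 * (x - y) * W + x * y ^ (2 * m + 1) := by
    have h1 : 2 * m + 1 - 1 = 2 * m := by omega
    rw [h1, ← Finset.Ico_add_one_right_eq_Icc, Finset.sum_Ico_eq_sum_range]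
    have h2 : 2 * m + 1 - 2 = 2 * m - 1 := by omega
    rw [h2]
    have h3 : ∑ i ∈ Finset.range (2 * m - 1),
          (-1 : MvPolynomial (Fin 3) k) ^ (2 + i) * x ^ (2 * m + 1 + 1 - (2 + i)) * y ^ (2 + i)
        = ∑ t ∈ Finset.range (2 * m - 1), (-1 : MvPolynomial (Fin 3) k) ^ t * x ^ (2 * m - t) * y ^ (t + 2) := by
      refine Finset.sum_congr rfl fun i hi => ?_
      have e1 : 2 * m + 1 + 1 - (2 + i) = 2 * m - i := by omega
      have e2 : 2 + i = i + 2 := by omega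
      rw [e1, e2, pow_add]
      norm_num
    rw [h3]
    have hL := aux_L x y m
    have h4 : 2 * m = (2 * m - 1) + 1 := by omega
    rw [h4, Finset.sum_range_succ] at hL
    have e5 : (2 * m - 1) + 1 = 2 * m := by omega
    have e6 : 2 * m - (2 * m - 1) = 1 := by omega
    have e7 : (2 * m - 1) + 2 = 2 * m + 1 := by omega
    rw [e5, e6, e7] at hL
    have e8 : (-1 : MvPolynomial (Fin 3) k) ^ (2 * m - 1) = -1 := by
      have : 2 * m - 1 = 2 * (m - 1) + 1 := by omega
      rw [this, pow_succ, pow_mul]; norm_num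
    rw [e8] at hL
    linear_combination hL
  rw [hF]
  have key : s * (x * y ^ 2 * (x - y) * W + x * y ^ (2 * m + 1))
      = y * x ^ (2 * m + 1) + ((s - 1) * x) * y ^ (2 * m + 1) + (-W) * g := by
    have ex : x ^ (2 * m + 1) = (x ^ 2) ^ m * x := by rw [← pow_mul]; ring_nf
    have ey : y ^ (2 * m + 1) = (y ^ 2) ^ m * y := by rw [← pow_mul]; ring_nf
    rw [ex, ey, hg]
    linear_combination (x * y) * hgeom
  rw [key]
  refine Ideal.add_mem _ (Ideal.add_mem _ ?_ ?_) ?_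
  · exact Ideal.mul_mem_left _ _ (Ideal.subset_span (Set.mem_insert _ _))
  · exact Ideal.mul_mem_left _ _
      (Ideal.subset_span (Set.mem_insert_of_mem _ (Set.mem_insert _ _)))
  · exact Ideal.mul_mem_left _ _
      (Ideal.subset_span (Set.mem_insert_of_mem _ (Set.mem_insert_of_mem _ rfl)))
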